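/- Let $(\mathcal{F}_n)_{n\ge 0}$ be a filtration on a probability space and let $(\xi_n)_{n\ge 1}$ be an adapted sequence of random variables taking values in $\{0,1\}$, with $\xi_n$ being $\mathcal{F}_n$-measurable, and set $\theta_n := \mathbb{P}(\xi_n = 1 \mid \mathcal{F}_{n-1})$. Then for any $\delta > 0$, any positive integer $N$, and any constant $\mu > 0$ such that $\sum_{i=1}^N \theta_i \le \mu$ almost surely, $\mathbb{P}\left(\sum_{i=1}^N \xi_i \ge (1+\delta)\mu\right) \le \left(\frac{e^{\delta}}{(1+\delta)^{1+\delta}}\right)^{\mu} \le \exp\left(-\frac{\delta^2}{2+\delta}\mu\right)$ (the martingale multiplicative Chernoff bound). -/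

import Mathlib

open MeasureTheory ProbabilityTheory Finset


lemma aux_hasDeriv (x : ℝ) (hx : 0 < 1 + x) :
    HasDerivAt (fun y : ℝ => Real.log (1+y) - 2*y/(2+y)) ((1+x)⁻¹ - 4/(2+x)^2) x := by
  have h1 : HasDerivAt (fun y : ℝ => Real.log (1+y)) ((1+x)⁻¹) x := by
    have := (Real.hasDerivAt_log (ne_of_gt hx)).comp x ((hasDerivAt_id x).const_add 1)
    simpa [Function.comp_def] using this
  have h2 : HasDerivAt (fun y : ℝ => 2*y/(2+y)) (4/(2+x)^2) x := by
    have ha : HasDerivAt (fun y : ℝ => 2*y) 2 x := by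
      simpa using (hasDerivAt_id x).const_mul 2
    have hb : HasDerivAt (fun y : ℝ => 2+y) 1 x := (hasDerivAt_id x).const_add 2
    have h2x : (2:ℝ) + x ≠ 0 := by nlinarith
    have := ha.div hb h2x
    rw [show (4:ℝ)/(2+x)^2 = (2*(2+x) - 2*x*1)/(2+x)^2 by ring]
    exact this
  exact h1.sub h2

lemma log_ineq {x : ℝ} (hx : 0 ≤ x) : 2*x/(2+x) ≤ Real.log (1+x) := by
  set f : ℝ → ℝ := fun y => Real.log (1+y) - 2*y/(2+y) with hf
  have key : MonotoneOn f (Set.Ici 0) := by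
    apply monotoneOn_of_deriv_nonneg (convex_Ici 0)
    · apply ContinuousOn.sub
      · apply ContinuousOn.log (by fun_prop)
        intro y hy; simp at hy; nlinarith
      · apply ContinuousOn.div (by fun_prop) (by fun_prop)
        intro y hy; simp at hy; nlinarith
    · intro y hy
      rw [interior_Ici] at hy
      simp at hy
      exact (aux_hasDeriv y (by linarith)).differentiableAt.differentiableWithinAt
    · intro y hy
      rw [interior_Ici] at hy
      simp at hy
      rw [(aux_hasDeriv y (by linarith)).deriv]
      rw [sub_nonneg, div_le_iff₀ (by positivity), inv_mul_eq_div, le_div_iff₀ (by nlinarith)]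
      nlinarith
  have h0 : f 0 = 0 := by simp [hf]
  have := key (Set.self_mem_Ici) (Set.mem_Ici.2 hx) hx
  rw [h0] at this
  simpa [hf, sub_nonneg] using this

lemma chernoff_key {Ω : Type*} {m0 : MeasurableSpace Ω} {μ : Measure Ω}
    [IsProbabilityMeasure μ] (ℱ : Filtration ℕ m0)
    (ξ θ : ℕ → Ω → ℝ)
    (hadapt : ∀ n, 1 ≤ n → StronglyMeasurable[ℱ n] (ξ n))
    (hval : ∀ n, 1 ≤ n → ∀ ω, ξ n ω = 0 ∨ ξ n ω = 1)
    (hθ : ∀ n, 1 ≤ n → θ n = μ[ξ n|ℱ (n - 1)])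
    (δ t : ℝ) (hδ : 0 < δ) (ht : 0 < t) (het : Real.exp t = 1 + δ) :
    ∀ n : ℕ, Integrable (fun ω => ∏ i ∈ Finset.Icc 1 n,
        Real.exp (t * ξ i ω - δ * θ i ω)) μ ∧
      ∫ ω, ∏ i ∈ Finset.Icc 1 n, Real.exp (t * ξ i ω - δ * θ i ω) ∂μ ≤ 1 := by
  -- basic facts
  have hξ01 : ∀ i, 1 ≤ i → ∀ ω, 0 ≤ ξ i ω ∧ ξ i ω ≤ 1 := by
    intro i hi ω; rcases hval i hi ω with h | h <;> rw [h] <;> norm_num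
  have hξm : ∀ i, 1 ≤ i → StronglyMeasurable[m0] (ξ i) :=
    fun i hi => (hadapt i hi).mono (ℱ.le i)
  have hξint : ∀ i, 1 ≤ i → Integrable (ξ i) μ := by
    intro i hi
    refine (integrable_const (1:ℝ)).mono' (hξm i hi).aestronglyMeasurable ?_
    filter_upwards with ω
    rw [Real.norm_eq_abs, abs_of_nonneg (hξ01 i hi ω).1]
    exact (hξ01 i hi ω).2
  have hθm : ∀ i, 1 ≤ i → StronglyMeasurable[ℱ (i-1)] (θ i) := by
    intro i hi; rw [hθ i hi]; exact stronglyMeasurable_condExp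
  have hθ01 : ∀ᵐ ω ∂μ, ∀ i, 1 ≤ i → 0 ≤ θ i ω ∧ θ i ω ≤ 1 := by
    rw [ae_all_iff]
    intro i
    by_cases hi : 1 ≤ i
    · have h0 : ∀ᵐ ω ∂μ, 0 ≤ θ i ω := by
        rw [hθ i hi]
        exact condExp_nonneg (Filter.Eventually.of_forall fun ω => (hξ01 i hi ω).1)
      have h1 : ∀ᵐ ω ∂μ, θ i ω ≤ 1 := by
        rw [hθ i hi]
        have hmono := condExp_mono (m := ℱ (i-1)) (hξint i hi) (integrable_const (1:ℝ))
          (Filter.Eventually.of_forall fun ω => (hξ01 i hi ω).2)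
        have hc : μ[(fun _ => (1:ℝ))|ℱ (i-1)] = fun _ => (1:ℝ) := condExp_const (ℱ.le _) 1
        filter_upwards [hmono] with ω hω
        rw [hc] at hω; exact hω
      filter_upwards [h0, h1] with ω h0 h1 _
      exact ⟨h0, h1⟩
    · filter_upwards with ω h; exact absurd h hi
  -- strong measurability of products
  have hYsm : ∀ n i, i ∈ Finset.Icc 1 n →
      StronglyMeasurable[ℱ n] (fun ω => Real.exp (t * ξ i ω - δ * θ i ω)) := by
    intro n i hi
    rw [Finset.mem_Icc] at hi
    have h1 : StronglyMeasurable[ℱ n] (ξ i) := (hadapt i hi.1).mono (ℱ.mono hi.2)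
    have h2 : StronglyMeasurable[ℱ n] (θ i) :=
      (hθm i hi.1).mono (ℱ.mono (le_trans (Nat.sub_le i 1) hi.2))
    exact Real.continuous_exp.comp_stronglyMeasurable ((h1.const_mul t).sub (h2.const_mul δ))
  have hMsm : ∀ n, StronglyMeasurable[ℱ n]
      (fun ω => ∏ i ∈ Finset.Icc 1 n, Real.exp (t * ξ i ω - δ * θ i ω)) := by
    intro n
    simpa only [Finset.prod_fn] using Finset.stronglyMeasurable_prod _ (fun i hi => hYsm n i hi)
  have hMpos : ∀ n ω, 0 < ∏ i ∈ Finset.Icc 1 n, Real.exp (t * ξ i ω - δ * θ i ω) :=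
    fun n ω => Finset.prod_pos fun i _ => Real.exp_pos _
  have hMbd : ∀ n, ∀ᵐ ω ∂μ, ∏ i ∈ Finset.Icc 1 n,
      Real.exp (t * ξ i ω - δ * θ i ω) ≤ Real.exp t ^ n := by
    intro n
    filter_upwards [hθ01] with ω hθω
    calc ∏ i ∈ Finset.Icc 1 n, Real.exp (t * ξ i ω - δ * θ i ω)
        ≤ ∏ _i ∈ Finset.Icc 1 n, Real.exp t := by
          apply Finset.prod_le_prod (fun i _ => (Real.exp_pos _).le)
          intro i hi
          rw [Finset.mem_Icc] at hi
          apply Real.exp_le_exp.2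
          have h1 := (hξ01 i hi.1 ω).2
          have h2 := (hθω i hi.1).1
          nlinarith
      _ = Real.exp t ^ n := by rw [Finset.prod_const, Nat.card_Icc]; norm_num
  have hMint : ∀ n, Integrable (fun ω => ∏ i ∈ Finset.Icc 1 n,
      Real.exp (t * ξ i ω - δ * θ i ω)) μ := by
    intro n
    refine (integrable_const (Real.exp t ^ n)).mono'
      ((hMsm n).mono (ℱ.le n)).aestronglyMeasurable ?_
    filter_upwards [hMbd n] with ω hω
    rw [Real.norm_eq_abs, abs_of_nonneg (hMpos n ω).le]
    exact hω
  -- induction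
  intro n
  induction n with
  | zero =>
    constructor
    · simpa using (integrable_const (1:ℝ))
    · simp
  | succ n ih =>
    refine ⟨hMint (n+1), ?_⟩
    have hsplit : ∀ ω, ∏ i ∈ Finset.Icc 1 (n+1), Real.exp (t * ξ i ω - δ * θ i ω)
        = (∏ i ∈ Finset.Icc 1 n, Real.exp (t * ξ i ω - δ * θ i ω)) *
          Real.exp (t * ξ (n+1) ω - δ * θ (n+1) ω) := by
      intro ω
      exact Finset.prod_Icc_succ_top (Nat.succ_le_succ (Nat.zero_le n)) _
    -- pointwise identity for the last factor
    have hfac : ∀ ω, Real.exp (t * ξ (n+1) ω - δ * θ (n+1) ω)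
        = (1 + δ * ξ (n+1) ω) * Real.exp (-(δ * θ (n+1) ω)) := by
      intro ω
      rcases hval (n+1) (Nat.succ_le_succ (Nat.zero_le n)) ω with h | h <;>
        rw [h] <;> simp [sub_eq_add_neg, Real.exp_add, het] <;> ring
    set M : Ω → ℝ := fun ω => ∏ i ∈ Finset.Icc 1 n, Real.exp (t * ξ i ω - δ * θ i ω)
      with hM
    set g : Ω → ℝ := fun ω => M ω * Real.exp (-(δ * θ (n+1) ω)) with hg
    have hθn1 : StronglyMeasurable[ℱ n] (θ (n+1)) := by
      have := hθm (n+1) (Nat.succ_le_succ (Nat.zero_le n))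
      simpa using this
    have hgsm : StronglyMeasurable[ℱ n] g :=
      (hMsm n).mul (Real.continuous_exp.comp_stronglyMeasurable (hθn1.const_mul δ).neg)
    have hgpos : ∀ ω, 0 ≤ g ω := fun ω => mul_nonneg (hMpos n ω).le (Real.exp_pos _).le
    have hgbd : ∀ᵐ ω ∂μ, g ω ≤ Real.exp t ^ n := by
      filter_upwards [hMbd n, hθ01] with ω h1 h2
      have hθnn := (h2 (n+1) (Nat.succ_le_succ (Nat.zero_le n))).1
      have : Real.exp (-(δ * θ (n+1) ω)) ≤ 1 := by
        rw [Real.exp_le_one_iff]; nlinarith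
      calc g ω ≤ M ω * 1 := by
            apply mul_le_mul_of_nonneg_left this (hMpos n ω).le
        _ ≤ Real.exp t ^ n := by rw [mul_one]; exact h1
    have hbdd_int : ∀ (f : Ω → ℝ), AEStronglyMeasurable f μ →
        (∀ᵐ ω ∂μ, |f ω| ≤ Real.exp t ^ n * 2) → Integrable f μ := by
      intro f hfm hfb
      exact (integrable_const (Real.exp t ^ n * 2)).mono' hfm
        (by filter_upwards [hfb] with ω h; rwa [Real.norm_eq_abs])
    have hgm0 : AEStronglyMeasurable g μ := (hgsm.mono (ℱ.le n)).aestronglyMeasurable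
    have hgint : Integrable g μ := by
      apply hbdd_int g hgm0
      filter_upwards [hgbd] with ω h
      rw [abs_of_nonneg (hgpos ω)]
      nlinarith [pow_pos (Real.exp_pos t) n]
    have hgξint : Integrable (fun ω => g ω * ξ (n+1) ω) μ := by
      refine hbdd_int (fun ω => g ω * ξ (n+1) ω)
        (hgm0.mul ((hξm (n+1) (Nat.succ_le_succ (Nat.zero_le n))).aestronglyMeasurable)) ?_
      filter_upwards [hgbd] with ω h
      have h1 := hξ01 (n+1) (Nat.succ_le_succ (Nat.zero_le n)) ω
      rw [abs_mul, abs_of_nonneg (hgpos ω), abs_of_nonneg h1.1]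
      nlinarith [pow_pos (Real.exp_pos t) n]
    have hgθint : Integrable (fun ω => g ω * θ (n+1) ω) μ := by
      refine hbdd_int (fun ω => g ω * θ (n+1) ω)
        (hgm0.mul ((hθn1.mono (ℱ.le n)).aestronglyMeasurable)) ?_
      filter_upwards [hgbd, hθ01] with ω h h2
      have h1 := h2 (n+1) (Nat.succ_le_succ (Nat.zero_le n))
      rw [abs_mul, abs_of_nonneg (hgpos ω), abs_of_nonneg h1.1]
      nlinarith [pow_pos (Real.exp_pos t) n]
    -- key conditional expectation step
    have hpull : ∫ ω, g ω * ξ (n+1) ω ∂μ = ∫ ω, g ω * θ (n+1) ω ∂μ := by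
      have h1 : μ[(fun ω => g ω * ξ (n+1) ω)|ℱ n] =ᵐ[μ]
          fun ω => g ω * (μ[ξ (n+1)|ℱ n]) ω := by
        have := condExp_mul_of_stronglyMeasurable_left (m := ℱ n) hgsm
          hgξint
          (hξint (n+1) (Nat.succ_le_succ (Nat.zero_le n)))
        exact this
      have h2 : μ[ξ (n+1)|ℱ n] = θ (n+1) := by
        rw [hθ (n+1) (Nat.succ_le_succ (Nat.zero_le n))]
        norm_num
      rw [h2] at h1
      calc ∫ ω, g ω * ξ (n+1) ω ∂μ
          = ∫ ω, (μ[(fun ω => g ω * ξ (n+1) ω)|ℱ n]) ω ∂μ :=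
            (integral_condExp (ℱ.le n)).symm
        _ = ∫ ω, g ω * θ (n+1) ω ∂μ := integral_congr_ae h1
    calc ∫ ω, ∏ i ∈ Finset.Icc 1 (n+1), Real.exp (t * ξ i ω - δ * θ i ω) ∂μ
        = ∫ ω, (g ω + δ * (g ω * ξ (n+1) ω)) ∂μ := by
          apply integral_congr_ae
          filter_upwards with ω
          rw [hsplit ω, hfac ω]
          simp only [hg, hM]
          ring
      _ = ∫ ω, g ω ∂μ + δ * ∫ ω, g ω * ξ (n+1) ω ∂μ := by
          rw [integral_add hgint (hgξint.const_mul δ), integral_const_mul δ _]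
      _ = ∫ ω, g ω ∂μ + δ * ∫ ω, g ω * θ (n+1) ω ∂μ := by rw [hpull]
      _ = ∫ ω, (g ω + δ * (g ω * θ (n+1) ω)) ∂μ := by
          rw [integral_add hgint (hgθint.const_mul δ), integral_const_mul δ _]
      _ ≤ ∫ ω, M ω ∂μ := by
          apply integral_mono_ae (hgint.add (hgθint.const_mul δ)) (hMint n)
          filter_upwards [hθ01] with ω h2
          simp only [Pi.add_apply]
          have h1 := (h2 (n+1) (Nat.succ_le_succ (Nat.zero_le n))).1
          have key : (1 + δ * θ (n+1) ω) * Real.exp (-(δ * θ (n+1) ω)) ≤ 1 := by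
            rw [← Real.exp_log (x := (1:ℝ) + δ * θ (n+1) ω) (by nlinarith),
              ← Real.exp_add, Real.exp_le_one_iff]
            have := Real.log_le_sub_one_of_pos (x := (1:ℝ) + δ * θ (n+1) ω) (by nlinarith)
            linarith
          have expand : g ω + δ * (g ω * θ (n+1) ω)
              = M ω * ((1 + δ * θ (n+1) ω) * Real.exp (-(δ * θ (n+1) ω))) := by
            simp only [hg]; ring
          rw [expand]
          calc M ω * ((1 + δ * θ (n+1) ω) * Real.exp (-(δ * θ (n+1) ω)))
              ≤ M ω * 1 := mul_le_mul_of_nonneg_left key (hMpos n ω).le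
            _ = M ω := mul_one _
      _ ≤ 1 := ih.2

/-- martingale multiplicative Chernoff bound: For a filtration `ℱ`, an adapted
`{0,1}`-valued sequence `ξ` (indexed from 1), and `θ n` the conditional expectation of `ξ n`
given `ℱ (n-1)` (which equals `P(ξ n = 1 ∣ ℱ (n-1))`), if `δ > 0`, `N ≥ 1`, `μ₀ > 0` and
`∑_{i=1}^N θ i ≤ μ₀` a.s., then
`P(∑_{i=1}^N ξ i ≥ (1+δ) μ₀) ≤ (e^δ/(1+δ)^(1+δ))^μ₀ ≤ exp(-(δ²/(2+δ)) μ₀)`. -/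
theorem statement1 {Ω : Type*} {m0 : MeasurableSpace Ω} {μ : Measure Ω}
    [IsProbabilityMeasure μ] (ℱ : Filtration ℕ m0)
    (ξ θ : ℕ → Ω → ℝ)
    (hadapt : ∀ n, 1 ≤ n → StronglyMeasurable[ℱ n] (ξ n))
    (hval : ∀ n, 1 ≤ n → ∀ ω, ξ n ω = 0 ∨ ξ n ω = 1)
    (hθ : ∀ n, 1 ≤ n → θ n = μ[ξ n|ℱ (n - 1)])
    (δ : ℝ) (hδ : 0 < δ) (N : ℕ) (hN : 1 ≤ N) (μ₀ : ℝ) (hμ₀ : 0 < μ₀)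
    (hbound : ∀ᵐ ω ∂μ, ∑ i ∈ Finset.Icc 1 N, θ i ω ≤ μ₀) :
    (μ {ω | (1 + δ) * μ₀ ≤ ∑ i ∈ Finset.Icc 1 N, ξ i ω}).toReal
        ≤ (Real.exp δ / (1 + δ) ^ (1 + δ)) ^ μ₀ ∧
    (Real.exp δ / (1 + δ) ^ (1 + δ)) ^ μ₀ ≤ Real.exp (-(δ ^ 2 / (2 + δ)) * μ₀) := by
  have h1δ : (0:ℝ) < 1 + δ := by linarith
  set t : ℝ := Real.log (1 + δ) with htdef
  have het : Real.exp t = 1 + δ := Real.exp_log h1δ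
  have ht : 0 < t := Real.log_pos (by linarith)
  obtain ⟨hMint, hMle⟩ := chernoff_key ℱ ξ θ hadapt hval hθ δ t hδ ht het N
  have hξ01 : ∀ i, 1 ≤ i → ∀ ω, 0 ≤ ξ i ω ∧ ξ i ω ≤ 1 := by
    intro i hi ω; rcases hval i hi ω with h | h <;> rw [h] <;> norm_num
  have hθ0 : ∀ᵐ ω ∂μ, ∀ i, 1 ≤ i → 0 ≤ θ i ω := by
    rw [ae_all_iff]
    intro i
    by_cases hi : 1 ≤ i
    · have h0 : ∀ᵐ ω ∂μ, 0 ≤ θ i ω := by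
        rw [hθ i hi]
        exact condExp_nonneg (Filter.Eventually.of_forall fun ω => (hξ01 i hi ω).1)
      filter_upwards [h0] with ω h0 _; exact h0
    · filter_upwards with ω h; exact absurd h hi
  set A : Set Ω := {ω | (1 + δ) * μ₀ ≤ ∑ i ∈ Finset.Icc 1 N, ξ i ω} with hA
  have hAm : MeasurableSet A := by
    apply measurableSet_le measurable_const
    exact Finset.measurable_sum _
      (fun i hi => ((hadapt i (Finset.mem_Icc.1 hi).1).mono (ℱ.le i)).measurable)
  set c : ℝ := Real.exp ((t * (1 + δ) - δ) * μ₀) with hc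
  have hcpos : 0 < c := Real.exp_pos _
  have hMpos : ∀ ω, 0 < ∏ i ∈ Finset.Icc 1 N, Real.exp (t * ξ i ω - δ * θ i ω) :=
    fun ω => Finset.prod_pos fun i _ => Real.exp_pos _
  have hae : ∀ᵐ ω ∂μ, ω ∈ A →
      c ≤ ∏ i ∈ Finset.Icc 1 N, Real.exp (t * ξ i ω - δ * θ i ω) := by
    filter_upwards [hbound, hθ0] with ω hb h0
    intro hωA
    rw [← Real.exp_sum]
    apply Real.exp_le_exp.2
    rw [Finset.sum_sub_distrib, ← Finset.mul_sum, ← Finset.mul_sum]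
    have h1 : (1 + δ) * μ₀ ≤ ∑ i ∈ Finset.Icc 1 N, ξ i ω := hωA
    nlinarith [mul_le_mul_of_nonneg_left h1 ht.le,
      mul_le_mul_of_nonneg_left hb hδ.le]
  have h3 : c * (μ A).toReal ≤ 1 := by
    calc c * (μ A).toReal = ∫ _ in A, c ∂μ := by
          rw [setIntegral_const, smul_eq_mul, mul_comm]; rfl
      _ ≤ ∫ ω in A, ∏ i ∈ Finset.Icc 1 N, Real.exp (t * ξ i ω - δ * θ i ω) ∂μ := by
          apply integral_mono_ae (integrableOn_const (C := c) (measure_lt_top μ A).ne)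
            hMint.integrableOn
          exact (ae_restrict_iff' hAm).2 hae
      _ ≤ ∫ ω, ∏ i ∈ Finset.Icc 1 N, Real.exp (t * ξ i ω - δ * θ i ω) ∂μ :=
          setIntegral_le_integral hMint (Filter.Eventually.of_forall fun ω => (hMpos ω).le)
      _ ≤ 1 := hMle
  have hrpow : (Real.exp δ / (1 + δ) ^ (1 + δ)) ^ μ₀ = Real.exp ((δ - (1 + δ) * t) * μ₀) := by
    rw [Real.rpow_def_of_pos (div_pos (Real.exp_pos δ) (Real.rpow_pos_of_pos h1δ _)),
      Real.log_div (Real.exp_ne_zero δ) (Real.rpow_pos_of_pos h1δ _).ne',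
      Real.log_exp, Real.log_rpow h1δ, ← htdef]
  constructor
  · have hx : (μ A).toReal ≤ c⁻¹ := by
      rw [inv_eq_one_div, le_div_iff₀ hcpos, mul_comm]
      exact h3
    rw [hrpow, show (δ - (1 + δ) * t) * μ₀ = -((t * (1 + δ) - δ) * μ₀) by ring,
      Real.exp_neg, ← hc]
    exact hx
  · rw [hrpow]
    apply Real.exp_le_exp.2
    have hlog : 2 * δ / (2 + δ) ≤ t := log_ineq hδ.le
    have h2δ : (0:ℝ) < 2 + δ := by linarith
    have h4 : δ + δ ^ 2 / (2 + δ) ≤ (1 + δ) * t := by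
      have hm := mul_le_mul_of_nonneg_left hlog (by linarith : (0:ℝ) ≤ 1 + δ)
      have heq : (1 + δ) * (2 * δ / (2 + δ)) = δ + δ ^ 2 / (2 + δ) := by
        field_simp; ring
      linarith
    have h5 : δ - (1 + δ) * t ≤ -(δ ^ 2 / (2 + δ)) := by linarith
    nlinarith [mul_le_mul_of_nonneg_right h5 hμ₀.le]
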